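/- Let m ≥ 1 be an integer, λ_B, λ_F > 0, and let G_B, G_F be independent Gamma random variables with shape m and rates λ_B, λ_F respectively, with CDF F_B of G_B. Let ε3 > 0, ε4 > 0 and ε5 = ε3 + ε4. Then P(G_B > ε5 and G_F < ε4·G_B/(G_B − ε3)) = 1 − F_B(ε5) − (λ_B^m/Γ(m)) · Σ_{i=0}^{m−1} ((λ_F ε4)^i / i!) · ∫_{ε5}^{∞} (y^{m+i−1}/(y − ε3)^i) · e^{−λ_B y − λ_F ε4 y/(y − ε3)} dy. -/

import Mathlib

open MeasureTheory ProbabilityTheory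

/-- The law of a Gamma random variable with integer shape `m` and rate `l`: the measure on ℝ
with density f(x) = l^m x^(m−1) e^(−lx)/Γ(m) for x > 0 (w.r.t. Lebesgue measure). -/
noncomputable def gammaLaw (m : ℕ) (l : ℝ) : Measure ℝ :=
  volume.withDensity fun x =>
    ENNReal.ofReal
      (if 0 < x then l ^ m * x ^ (m - 1) * Real.exp (-(l * x)) / Real.Gamma m else 0)

/-- The CDF F(x) = 1 − e^(−lx) Σ_{i=0}^{m−1} (lx)^i/i! of a Gamma random variable with integer
shape `m` and rate `l`. -/
noncomputable def gammaCDF (m : ℕ) (l x : ℝ) : ℝ :=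
  1 - Real.exp (-(l * x)) * ∑ i ∈ Finset.range m, (l * x) ^ i / (Nat.factorial i : ℝ)

open Set Filter Topology


lemma hasDerivAt_gsum (l : ℝ) (k : ℕ) (t : ℝ) :
    HasDerivAt (fun t => Real.exp (-(l * t)) *
        ∑ i ∈ Finset.range (k+1), (l * t) ^ i / (Nat.factorial i : ℝ))
      (-(l ^ (k+1) * t ^ k * Real.exp (-(l * t)) / (Nat.factorial k : ℝ))) t := by
  induction k with
  | zero =>
      simp only [Finset.sum_range_one, pow_zero, Nat.factorial_zero, Nat.cast_one, div_one,
        mul_one, pow_one]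
      have h : HasDerivAt (fun t : ℝ => Real.exp (-(l * t))) (Real.exp (-(l * t)) * -(l * 1)) t :=
        (((hasDerivAt_id t).const_mul l).neg).exp
      have he : (fun t : ℝ => Real.exp (-(l * t)) * ∑ i ∈ Finset.range 1, (l * t) ^ i / (Nat.factorial i : ℝ)) = fun t : ℝ => Real.exp (-(l * t)) := by
        funext t; simp
      rw [he]
      convert h using 1
      ring
  | succ k ih =>
      have hexp : HasDerivAt (fun t : ℝ => Real.exp (-(l * t))) (Real.exp (-(l * t)) * -(l * 1)) t :=
        (((hasDerivAt_id t).const_mul l).neg).exp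
      have hpow : HasDerivAt (fun t : ℝ => (l * t) ^ (k+1))
          ((↑(k+1) : ℝ) * (l * t) ^ k * (l * 1)) t :=
        ((hasDerivAt_id t).const_mul l).pow (k+1)
      have h2 : HasDerivAt (fun t : ℝ => Real.exp (-(l * t)) * ((l * t) ^ (k+1) / (Nat.factorial (k+1) : ℝ)))
          (Real.exp (-(l * t)) * -(l * 1) * ((l * t) ^ (k+1) / (Nat.factorial (k+1) : ℝ)) +
            Real.exp (-(l * t)) * ((↑(k+1) : ℝ) * (l * t) ^ k * (l * 1) / (Nat.factorial (k+1) : ℝ))) t :=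
        hexp.mul (hpow.div_const _)
      have := ih.add h2
      simp only [Finset.sum_range_succ, mul_add] at *
      refine this.congr_deriv ?_
      have hk : (Nat.factorial (k+1) : ℝ) = (k+1) * (Nat.factorial k : ℝ) := by
        push_cast [Nat.factorial_succ]; ring
      have h0 : (Nat.factorial k : ℝ) ≠ 0 := Nat.cast_ne_zero.mpr (Nat.factorial_ne_zero k)
      rw [hk]
      field_simp
      push_cast
      ring

lemma tendsto_gsum (m : ℕ) {l : ℝ} (hl : 0 < l) :
    Tendsto (fun t => Real.exp (-(l * t)) *
      ∑ i ∈ Finset.range m, (l * t) ^ i / (Nat.factorial i : ℝ)) atTop (𝓝 0) := by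
  have h : ∀ t : ℝ, Real.exp (-(l * t)) * ∑ i ∈ Finset.range m, (l * t) ^ i / (Nat.factorial i : ℝ)
      = ∑ i ∈ Finset.range m, ((l * t) ^ i * Real.exp (-(l * t))) / (Nat.factorial i : ℝ) := by
    intro t; rw [Finset.mul_sum]; exact Finset.sum_congr rfl fun i _ => by ring
  simp only [h]
  have h0 : Tendsto (fun t : ℝ => l * t) atTop atTop :=
    Tendsto.const_mul_atTop hl tendsto_id
  have := tendsto_finset_sum (Finset.range m) (fun i _ =>
    (((Real.tendsto_pow_mul_exp_neg_atTop_nhds_zero i).comp h0).div_const (Nat.factorial i : ℝ)))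
  simpa using this

lemma gsum_nonneg (m : ℕ) {l t : ℝ} (hlt : 0 ≤ l * t) :
    0 ≤ Real.exp (-(l * t)) * ∑ i ∈ Finset.range m, (l * t) ^ i / (Nat.factorial i : ℝ) := by
  apply mul_nonneg (Real.exp_nonneg _)
  exact Finset.sum_nonneg fun i _ => by positivity

lemma gsum_le_one (m : ℕ) {l t : ℝ} (hlt : 0 ≤ l * t) :
    Real.exp (-(l * t)) * ∑ i ∈ Finset.range m, (l * t) ^ i / (Nat.factorial i : ℝ) ≤ 1 := by
  calc Real.exp (-(l * t)) * ∑ i ∈ Finset.range m, (l * t) ^ i / (Nat.factorial i : ℝ)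
      ≤ Real.exp (-(l * t)) * Real.exp (l * t) :=
        mul_le_mul_of_nonneg_left (Real.sum_le_exp_of_nonneg hlt m) (Real.exp_nonneg _)
    _ = 1 := by rw [← Real.exp_add]; simp

lemma term_le_one {t : ℝ} (ht : 0 ≤ t) (i : ℕ) :
    Real.exp (-t) * (t ^ i / (Nat.factorial i : ℝ)) ≤ 1 := by
  have h1 : t ^ i / (Nat.factorial i : ℝ) ≤ Real.exp t := by
    calc t ^ i / (Nat.factorial i : ℝ)
        ≤ ∑ j ∈ Finset.range (i+1), t ^ j / (Nat.factorial j : ℝ) :=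
          Finset.single_le_sum (f := fun j => t ^ j / (Nat.factorial j : ℝ))
            (fun j _ => by positivity) (Finset.self_mem_range_succ i)
      _ ≤ Real.exp t := Real.sum_le_exp_of_nonneg ht _
  calc Real.exp (-t) * (t ^ i / (Nat.factorial i : ℝ))
      ≤ Real.exp (-t) * Real.exp t := mul_le_mul_of_nonneg_left h1 (Real.exp_nonneg _)
    _ = 1 := by rw [← Real.exp_add]; simp

lemma gamma_tail (m : ℕ) (hm : 1 ≤ m) {l a : ℝ} (hl : 0 < l) (ha : 0 < a) :
    IntegrableOn (fun y => l ^ m * y ^ (m - 1) * Real.exp (-(l * y)) / Real.Gamma m) (Ioi a)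
      volume ∧
    ∫ y in Ioi a, l ^ m * y ^ (m - 1) * Real.exp (-(l * y)) / Real.Gamma m =
      Real.exp (-(l * a)) * ∑ i ∈ Finset.range m, (l * a) ^ i / (Nat.factorial i : ℝ) := by
  obtain ⟨k, rfl⟩ : ∃ k, m = k + 1 := ⟨m - 1, (Nat.succ_pred_eq_of_pos hm).symm⟩
  simp only [Nat.cast_add, Nat.cast_one, Real.Gamma_nat_eq_factorial, Nat.add_sub_cancel]
  have hderiv : ∀ x ∈ Ici a,
      HasDerivAt (fun t => -(Real.exp (-(l * t)) *
        ∑ i ∈ Finset.range (k+1), (l * t) ^ i / (Nat.factorial i : ℝ)))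
        (l ^ (k+1) * x ^ k * Real.exp (-(l * x)) / (Nat.factorial k : ℝ)) x := by
    intro x _
    have := (hasDerivAt_gsum l k x).neg
    rw [neg_neg] at this
    exact this
  have hnonneg : ∀ x ∈ Ioi a,
      0 ≤ l ^ (k+1) * x ^ k * Real.exp (-(l * x)) / (Nat.factorial k : ℝ) := by
    intro x hx
    have hx0 : 0 < x := ha.trans hx
    positivity
  have htend : Tendsto (fun t => -(Real.exp (-(l * t)) *
      ∑ i ∈ Finset.range (k+1), (l * t) ^ i / (Nat.factorial i : ℝ))) atTop (𝓝 0) := by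
    simpa using (tendsto_gsum (k+1) hl).neg
  constructor
  · exact integrableOn_Ioi_deriv_of_nonneg' hderiv hnonneg htend
  · rw [integral_Ioi_of_hasDerivAt_of_nonneg' hderiv hnonneg htend]
    simp

lemma gammaLaw_Ioi (m : ℕ) (hm : 1 ≤ m) {l a : ℝ} (hl : 0 < l) (ha : 0 < a) :
    gammaLaw m l (Ioi a) = ENNReal.ofReal
      (Real.exp (-(l * a)) * ∑ i ∈ Finset.range m, (l * a) ^ i / (Nat.factorial i : ℝ)) := by
  rw [gammaLaw, withDensity_apply _ measurableSet_Ioi]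
  rw [setLIntegral_congr_fun measurableSet_Ioi (fun y (hy : a < y) => by
    rw [if_pos (ha.trans hy)])]
  rw [← ofReal_integral_eq_lintegral_ofReal (gamma_tail m hm hl ha).1
    ((ae_restrict_iff' measurableSet_Ioi).mpr (ae_of_all _ fun y (hy : a < y) => by
      have : 0 < y := ha.trans hy
      have := Real.Gamma_pos_of_pos (show (0:ℝ) < m by exact_mod_cast hm)
      positivity))]
  rw [(gamma_tail m hm hl ha).2]

lemma gammaLaw_Iio (m : ℕ) (hm : 1 ≤ m) {l a : ℝ} (hl : 0 < l) (ha : 0 < a)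
    [IsProbabilityMeasure (gammaLaw m l)] :
    gammaLaw m l (Iio a) = ENNReal.ofReal (gammaCDF m l a) := by
  have hsing : gammaLaw m l {a} = 0 := by
    rw [gammaLaw, withDensity_apply _ (measurableSet_singleton a),
      Measure.restrict_eq_zero.mpr (by simp), lintegral_zero_measure]
  have hIci : gammaLaw m l (Ici a) = ENNReal.ofReal
      (Real.exp (-(l * a)) * ∑ i ∈ Finset.range m, (l * a) ^ i / (Nat.factorial i : ℝ)) := by
    rw [← Set.Ioi_union_left]
    have hu : gammaLaw m l (Ioi a ∪ {a}) = gammaLaw m l (Ioi a) :=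
      le_antisymm (le_trans (measure_union_le _ _) (by rw [hsing, add_zero]))
        (measure_mono Set.subset_union_left)
    rw [hu, gammaLaw_Ioi m hm hl ha]
  have h2 : gammaLaw m l (Iio a) = gammaLaw m l Set.univ - gammaLaw m l (Ici a) := by
    rw [← measure_compl measurableSet_Ici (measure_ne_top _ _), compl_Ici]
  rw [h2, measure_univ, hIci, gammaCDF, ← ENNReal.ofReal_one,
    ← ENNReal.ofReal_sub _ (gsum_nonneg m (by positivity))]

noncomputable def dReal (m : ℕ) (l x : ℝ) : ℝ :=
  if 0 < x then l ^ m * x ^ (m - 1) * Real.exp (-(l * x)) / Real.Gamma m else 0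

lemma gammaLaw_eq (m : ℕ) (l : ℝ) :
    gammaLaw m l = volume.withDensity fun x => ENNReal.ofReal (dReal m l x) := rfl

lemma measurable_dReal (m : ℕ) (l : ℝ) : Measurable (dReal m l) := by
  unfold dReal
  apply Measurable.ite (measurableSet_lt measurable_const measurable_id) _ measurable_const
  fun_prop

lemma dReal_nonneg (m : ℕ) (hm : 1 ≤ m) {l : ℝ} (hl : 0 < l) (x : ℝ) : 0 ≤ dReal m l x := by
  have hΓ : 0 < Real.Gamma m := Real.Gamma_pos_of_pos (by exact_mod_cast hm)
  unfold dReal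
  split_ifs with h
  · positivity
  · exact le_refl 0


lemma gammaCDF_nonneg (m : ℕ) {l t : ℝ} (hlt : 0 ≤ l * t) : 0 ≤ gammaCDF m l t :=
  sub_nonneg.mpr (gsum_le_one m hlt)

lemma gammaCDF_le_one (m : ℕ) {l t : ℝ} (hlt : 0 ≤ l * t) : gammaCDF m l t ≤ 1 := by
  have := gsum_nonneg m hlt
  unfold gammaCDF; linarith


/-- Let m ≥ 1 be an integer, λ_B, λ_F > 0, and let G_B, G_F be independent Gamma
random variables with shape m and rates λ_B, λ_F respectively, with CDF F_B of G_B. Let ε3 > 0,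
ε4 > 0 and ε5 = ε3 + ε4. Then
P(G_B > ε5 and G_F < ε4·G_B/(G_B − ε3))
  = 1 − F_B(ε5) − (λ_B^m/Γ(m)) Σ_{i=0}^{m−1} ((λ_F ε4)^i/i!)
      ∫_{ε5}^{∞} y^{m+i−1}/(y − ε3)^i · e^{−λ_B y − λ_F ε4 y/(y − ε3)} dy. -/
theorem stmt_12 {Ω : Type*} [MeasurableSpace Ω] (P : Measure Ω) [IsProbabilityMeasure P]
    (m : ℕ) (hm : 1 ≤ m) (lB lF : ℝ) (hlB : 0 < lB) (hlF : 0 < lF)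
    (GB GF : Ω → ℝ) (hGB : Measurable GB) (hGF : Measurable GF)
    (hBlaw : P.map GB = gammaLaw m lB) (hFlaw : P.map GF = gammaLaw m lF)
    (hindep : IndepFun GB GF P)
    (ε3 ε4 : ℝ) (hε3 : 0 < ε3) (hε4 : 0 < ε4) :
    (P {ω | ε3 + ε4 < GB ω ∧ GF ω < ε4 * GB ω / (GB ω - ε3)}).toReal =
      1 - gammaCDF m lB (ε3 + ε4) -
        lB ^ m / Real.Gamma m *
          ∑ i ∈ Finset.range m,
            (lF * ε4) ^ i / (Nat.factorial i : ℝ) *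
              ∫ y in Set.Ioi (ε3 + ε4),
                y ^ (m + i - 1) / (y - ε3) ^ i *
                  Real.exp (-(lB * y) - lF * ε4 * y / (y - ε3)) := by
  haveI hPB : IsProbabilityMeasure (gammaLaw m lB) :=
    hBlaw ▸ Measure.isProbabilityMeasure_map hGB.aemeasurable
  haveI hPF : IsProbabilityMeasure (gammaLaw m lF) :=
    hFlaw ▸ Measure.isProbabilityMeasure_map hGF.aemeasurable
  have hε5 : (0:ℝ) < ε3 + ε4 := by linarith
  have hΓpos : 0 < Real.Gamma m := Real.Gamma_pos_of_pos (by exact_mod_cast hm)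
  have hg_meas : Measurable fun y : ℝ => ε4 * y / (y - ε3) :=
    (measurable_const.mul measurable_id).div (measurable_id.sub measurable_const)
  have hS : MeasurableSet {p : ℝ × ℝ | ε3 + ε4 < p.1 ∧ p.2 < ε4 * p.1 / (p.1 - ε3)} :=
    (measurableSet_lt measurable_const measurable_fst).inter
      (measurableSet_lt measurable_snd (hg_meas.comp measurable_fst))
  have hprod : P.map (fun ω => (GB ω, GF ω)) = (gammaLaw m lB).prod (gammaLaw m lF) := by
    rw [← hBlaw, ← hFlaw]
    exact (indepFun_iff_map_prod_eq_prod_map_map hGB.aemeasurable hGF.aemeasurable).mp hindep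
  have hPS : P {ω | ε3 + ε4 < GB ω ∧ GF ω < ε4 * GB ω / (GB ω - ε3)} =
      ((gammaLaw m lB).prod (gammaLaw m lF))
        {p : ℝ × ℝ | ε3 + ε4 < p.1 ∧ p.2 < ε4 * p.1 / (p.1 - ε3)} := by
    rw [← hprod, Measure.map_apply (hGB.prodMk hGF) hS]
    rfl
  -- slices
  have hslice : ∀ y : ℝ,
      gammaLaw m lF (Prod.mk y ⁻¹' {p : ℝ × ℝ | ε3 + ε4 < p.1 ∧ p.2 < ε4 * p.1 / (p.1 - ε3)}) =
      Set.indicator (Ioi (ε3 + ε4))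
        (fun y => ENNReal.ofReal (gammaCDF m lF (ε4 * y / (y - ε3)))) y := by
    intro y
    by_cases hy : ε3 + ε4 < y
    · have hy0 : 0 < y := hε5.trans hy
      have hy3 : 0 < y - ε3 := by linarith
      have hgy : 0 < ε4 * y / (y - ε3) := div_pos (mul_pos hε4 hy0) hy3
      have hpre : Prod.mk y ⁻¹'
          {p : ℝ × ℝ | ε3 + ε4 < p.1 ∧ p.2 < ε4 * p.1 / (p.1 - ε3)} =
          Iio (ε4 * y / (y - ε3)) := by
        ext x; simp [hy]
      rw [hpre, gammaLaw_Iio m hm hlF hgy, Set.indicator_of_mem (Set.mem_Ioi.mpr hy)]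
    · have hpre : Prod.mk y ⁻¹'
          {p : ℝ × ℝ | ε3 + ε4 < p.1 ∧ p.2 < ε4 * p.1 / (p.1 - ε3)} = ∅ := by
        ext x; simp [hy]
      rw [hpre, measure_empty, Set.indicator_of_notMem (by simpa using hy)]
  -- useful pointwise facts on Ioi (ε3+ε4)
  have hFc01 : ∀ y ∈ Ioi (ε3 + ε4), 0 ≤ gammaCDF m lF (ε4 * y / (y - ε3)) ∧
      gammaCDF m lF (ε4 * y / (y - ε3)) ≤ 1 := by
    intro y hy
    have hy0 : 0 < y := hε5.trans hy
    have hy3 : 0 < y - ε3 := by simp only [mem_Ioi] at hy; linarith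
    have hgy : 0 < ε4 * y / (y - ε3) := div_pos (mul_pos hε4 hy0) hy3
    have hlt : 0 ≤ lF * (ε4 * y / (y - ε3)) := by positivity
    exact ⟨gammaCDF_nonneg m hlt, gammaCDF_le_one m hlt⟩
  have hdB_int : IntegrableOn (dReal m lB) (Ioi (ε3 + ε4)) volume := by
    refine ((gamma_tail m hm hlB hε5).1).congr_fun (fun y hy => ?_) measurableSet_Ioi
    exact (if_pos (hε5.trans hy)).symm
  have hdB_val : ∫ y in Ioi (ε3 + ε4), dReal m lB y =
      Real.exp (-(lB * (ε3 + ε4))) *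
        ∑ i ∈ Finset.range m, (lB * (ε3 + ε4)) ^ i / (Nat.factorial i : ℝ) := by
    have hEq : EqOn (dReal m lB)
        (fun y => lB ^ m * y ^ (m - 1) * Real.exp (-(lB * y)) / Real.Gamma m)
        (Ioi (ε3 + ε4)) := fun y hy => by unfold dReal; rw [if_pos (hε5.trans hy)]
    rw [setIntegral_congr_fun measurableSet_Ioi hEq]
    exact (gamma_tail m hm hlB hε5).2
  have hFcg_meas : Measurable fun y : ℝ => gammaCDF m lF (ε4 * y / (y - ε3)) := by
    have hc : Continuous (gammaCDF m lF) := by unfold gammaCDF; fun_prop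
    exact hc.measurable.comp hg_meas
  have hInt : Integrable (fun y => dReal m lB y * gammaCDF m lF (ε4 * y / (y - ε3)))
      (volume.restrict (Ioi (ε3 + ε4))) := by
    refine Integrable.mono hdB_int (((measurable_dReal m lB).mul hFcg_meas).aestronglyMeasurable) ?_
    refine (ae_restrict_iff' measurableSet_Ioi).mpr (ae_of_all _ fun y hy => ?_)
    obtain ⟨h0, h1⟩ := hFc01 y hy
    have hd := dReal_nonneg m hm hlB y
    rw [Real.norm_eq_abs, Real.norm_eq_abs, abs_mul, abs_of_nonneg hd, abs_of_nonneg h0]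
    exact mul_le_of_le_one_right hd h1
  have hIntNN : 0 ≤ ∫ y in Ioi (ε3 + ε4), dReal m lB y * gammaCDF m lF (ε4 * y / (y - ε3)) := by
    refine setIntegral_nonneg measurableSet_Ioi fun y hy => ?_
    exact mul_nonneg (dReal_nonneg m hm hlB y) (hFc01 y hy).1
  have hPT : ((gammaLaw m lB).prod (gammaLaw m lF))
      {p : ℝ × ℝ | ε3 + ε4 < p.1 ∧ p.2 < ε4 * p.1 / (p.1 - ε3)} =
      ENNReal.ofReal (∫ y in Ioi (ε3 + ε4),
        dReal m lB y * gammaCDF m lF (ε4 * y / (y - ε3))) := by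
    rw [Measure.prod_apply hS, lintegral_congr hslice,
      lintegral_indicator measurableSet_Ioi,
      gammaLaw_eq, restrict_withDensity measurableSet_Ioi,
      lintegral_withDensity_eq_lintegral_mul _ (measurable_dReal m lB).ennreal_ofReal
        hFcg_meas.ennreal_ofReal,
      ofReal_integral_eq_lintegral_ofReal hInt
        ((ae_restrict_iff' measurableSet_Ioi).mpr (ae_of_all _ fun y hy =>
          mul_nonneg (dReal_nonneg m hm hlB y) (hFc01 y hy).1))]
    refine setLIntegral_congr_fun measurableSet_Ioi (fun y hy => ?_)
    simp only [Pi.mul_apply]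
    exact (ENNReal.ofReal_mul (dReal_nonneg m hm hlB y)).symm
  rw [hPS, hPT, ENNReal.toReal_ofReal hIntNN]
  have halg : ∀ i : ℕ, ∀ y ∈ Ioi (ε3 + ε4),
      dReal m lB y * (Real.exp (-(lF * (ε4 * y / (y - ε3)))) *
        ((lF * (ε4 * y / (y - ε3))) ^ i / (Nat.factorial i : ℝ))) =
      lB ^ m / Real.Gamma m * ((lF * ε4) ^ i / (Nat.factorial i : ℝ) *
        (y ^ (m + i - 1) / (y - ε3) ^ i * Real.exp (-(lB * y) - lF * ε4 * y / (y - ε3)))) := by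
    intro i y hy
    have hy0 : 0 < y := hε5.trans hy
    have hy3 : 0 < y - ε3 := by simp only [mem_Ioi] at hy; linarith
    have hfac : ((Nat.factorial i : ℝ)) ≠ 0 := Nat.cast_ne_zero.mpr (Nat.factorial_ne_zero i)
    have hΓ : Real.Gamma m ≠ 0 := hΓpos.ne'
    have hy3' : y - ε3 ≠ 0 := hy3.ne'
    unfold dReal
    rw [if_pos hy0,
      show m + i - 1 = (m - 1) + i by omega, pow_add,
      show lF * (ε4 * y / (y - ε3)) = lF * ε4 * y / (y - ε3) by ring,
      div_pow, mul_pow,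
      show -(lB * y) - lF * ε4 * y / (y - ε3) = -(lB * y) + -(lF * ε4 * y / (y - ε3)) by ring,
      Real.exp_add]
    field_simp
  have hv_int : ∀ i : ℕ, IntegrableOn (fun y => lB ^ m / Real.Gamma m *
      ((lF * ε4) ^ i / (Nat.factorial i : ℝ) *
        (y ^ (m + i - 1) / (y - ε3) ^ i * Real.exp (-(lB * y) - lF * ε4 * y / (y - ε3)))))
      (Ioi (ε3 + ε4)) volume := by
    intro i
    have hmeas : Measurable fun y : ℝ => lB ^ m / Real.Gamma m *
        ((lF * ε4) ^ i / (Nat.factorial i : ℝ) *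
          (y ^ (m + i - 1) / (y - ε3) ^ i * Real.exp (-(lB * y) - lF * ε4 * y / (y - ε3)))) := by
      fun_prop
    refine Integrable.mono hdB_int hmeas.aestronglyMeasurable ?_
    refine (ae_restrict_iff' measurableSet_Ioi).mpr (ae_of_all _ fun y hy => ?_)
    have hy0 : 0 < y := hε5.trans hy
    have hy3 : 0 < y - ε3 := by simp only [mem_Ioi] at hy; linarith
    have hw0 : 0 ≤ Real.exp (-(lF * (ε4 * y / (y - ε3)))) *
        ((lF * (ε4 * y / (y - ε3))) ^ i / (Nat.factorial i : ℝ)) := by positivity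
    have hw1 : Real.exp (-(lF * (ε4 * y / (y - ε3)))) *
        ((lF * (ε4 * y / (y - ε3))) ^ i / (Nat.factorial i : ℝ)) ≤ 1 :=
      term_le_one (by positivity) i
    rw [← halg i y hy, Real.norm_eq_abs, Real.norm_eq_abs, abs_mul,
      abs_of_nonneg (dReal_nonneg m hm hlB y), abs_of_nonneg hw0]
    exact mul_le_of_le_one_right (dReal_nonneg m hm hlB y) hw1
  have hsplit : EqOn (fun y => dReal m lB y * gammaCDF m lF (ε4 * y / (y - ε3)))
      (fun y => dReal m lB y - ∑ i ∈ Finset.range m, lB ^ m / Real.Gamma m *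
        ((lF * ε4) ^ i / (Nat.factorial i : ℝ) *
          (y ^ (m + i - 1) / (y - ε3) ^ i * Real.exp (-(lB * y) - lF * ε4 * y / (y - ε3)))))
      (Ioi (ε3 + ε4)) := by
    intro y hy
    simp only [gammaCDF]
    rw [mul_sub, mul_one]
    congr 1
    rw [Finset.mul_sum, Finset.mul_sum]
    exact Finset.sum_congr rfl fun i _ => halg i y hy
  have hfinal : ∫ y in Ioi (ε3 + ε4), dReal m lB y * gammaCDF m lF (ε4 * y / (y - ε3)) =
      (∫ y in Ioi (ε3 + ε4), dReal m lB y) -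
        ∑ i ∈ Finset.range m, lB ^ m / Real.Gamma m *
          ((lF * ε4) ^ i / (Nat.factorial i : ℝ) *
            ∫ y in Ioi (ε3 + ε4), y ^ (m + i - 1) / (y - ε3) ^ i *
              Real.exp (-(lB * y) - lF * ε4 * y / (y - ε3))) := by
    rw [setIntegral_congr_fun measurableSet_Ioi hsplit,
      integral_sub hdB_int (integrable_finset_sum _ fun i _ => hv_int i),
      integral_finset_sum _ fun i _ => hv_int i]
    congr 1
    refine Finset.sum_congr rfl fun i _ => ?_
    rw [integral_const_mul, integral_const_mul]
  rw [hfinal, hdB_val]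
  simp only [gammaCDF, Finset.mul_sum]
  ring
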